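/- Let n ∈ ℕ, let U ⊂ ℝ^d be open, let f_1,…,f_n : U → ℝ, let z = (z¹,…,zⁿ) : ℝ → ℝ^n be differentiable, let s ∈ ℝ, and let ρ₀ : U × ℝ → ℝ be such that ρ₀(x,·) is continuously differentiable for each x ∈ U. Define v_{s,t}(x) := exp(−Σ_{k=1}^n f_k(x)(z^k(t) − z^k(s))) and ρ(x,ξ,t) := ρ₀(x, ξ · v_{s,t}(x)) · v_{s,t}(x). Then ρ(x,ξ,s) = ρ₀(x,ξ), and for every (x,ξ,t) ∈ U × ℝ × ℝ the time derivative ∂_t ρ(x,ξ,t) exists and satisfies ∂_t ρ(x,ξ,t) = −∂_ξ( ρ(x,ξ,t) · ξ · Σ_{k=1}^n f_k(x)(z^k)'(t) ), that is, ∂_t ρ = −(Σ_k f_k(x)(z^k)'(t)) (ρ(x,ξ,t) + ξ ∂_ξ ρ(x,ξ,t)). -/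

import Mathlib

open Real

/-- Transport of a test function along the inverse characteristics, weighted by the
change-of-variables factor `v_{s,t}(x) = exp(−Σ_k f_k(x)(z^k(t) − z^k(s)))`, solves the
conservative transport equation `∂_t ρ = −∂_ξ(ρ ξ Σ_k f_k(x) (z^k)'(t))`, i.e.
`∂_t ρ = −(Σ_k f_k(x)(z^k)'(t)) (ρ + ξ ∂_ξ ρ)`, with `ρ(x,ξ,s) = ρ₀(x,ξ)`. -/
theorem stmt8 (d n : ℕ) (U : Set (EuclideanSpace ℝ (Fin d))) (hU : IsOpen U)
    (f : Fin n → EuclideanSpace ℝ (Fin d) → ℝ)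
    (z : Fin n → ℝ → ℝ) (hz : ∀ k, Differentiable ℝ (z k)) (s : ℝ)
    (ρ₀ : EuclideanSpace ℝ (Fin d) → ℝ → ℝ)
    (hρ₀ : ∀ x ∈ U, ContDiff ℝ 1 (ρ₀ x)) :
    ∀ x ∈ U, ∀ ξ t : ℝ,
      -- initial condition: ρ(x, ξ, s) = ρ₀(x, ξ)
      (ρ₀ x (ξ * Real.exp (-∑ k, f k x * (z k s - z k s))) *
        Real.exp (-∑ k, f k x * (z k s - z k s)) = ρ₀ x ξ) ∧
      -- ∂_t ρ = −(Σ_k f_k(x)(z^k)'(t)) (ρ(x,ξ,t) + ξ ∂_ξ ρ(x,ξ,t))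
      HasDerivAt
        (fun τ => ρ₀ x (ξ * Real.exp (-∑ k, f k x * (z k τ - z k s))) *
          Real.exp (-∑ k, f k x * (z k τ - z k s)))
        (-(∑ k, f k x * deriv (z k) t) *
          (ρ₀ x (ξ * Real.exp (-∑ k, f k x * (z k t - z k s))) *
              Real.exp (-∑ k, f k x * (z k t - z k s)) +
            ξ * deriv (fun ξ' => ρ₀ x (ξ' * Real.exp (-∑ k, f k x * (z k t - z k s))) *
              Real.exp (-∑ k, f k x * (z k t - z k s))) ξ)) t := by
  intro x hx ξ t
  have hρ : Differentiable ℝ (ρ₀ x) := (hρ₀ x hx).differentiable one_ne_zero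
  constructor
  · simp
  · set A : ℝ := ∑ k, f k x * deriv (z k) t with hA
    set E : ℝ → ℝ := fun τ => Real.exp (-∑ k, f k x * (z k τ - z k s)) with hE
    -- derivative of the exponent
    have hg : HasDerivAt (fun τ => -∑ k, f k x * (z k τ - z k s)) (-A) t := by
      have : HasDerivAt (fun τ => ∑ k, f k x * (z k τ - z k s)) A t := by
        rw [hA]
        refine HasDerivAt.fun_sum fun k _ => ?_
        have := ((hz k t).hasDerivAt.sub_const (z k s)).const_mul (f k x)
        simpa using this
      simpa using this.fun_neg
    have hEd : HasDerivAt E (E t * (-A)) t := hg.exp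
    -- derivative of ρ₀ x at the point ξ * E t
    have hρd : HasDerivAt (ρ₀ x) (deriv (ρ₀ x) (ξ * E t)) (ξ * E t) :=
      (hρ (ξ * E t)).hasDerivAt
    have h1 : HasDerivAt (fun τ => ρ₀ x (ξ * E τ))
        (deriv (ρ₀ x) (ξ * E t) * (ξ * (E t * (-A)))) t :=
      hρd.comp t (hEd.const_mul ξ)
    have h2 : HasDerivAt (fun τ => ρ₀ x (ξ * E τ) * E τ)
        (deriv (ρ₀ x) (ξ * E t) * (ξ * (E t * (-A))) * E t
          + ρ₀ x (ξ * E t) * (E t * (-A))) t := h1.mul hEd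
    -- the ξ-derivative
    have h3 : HasDerivAt (fun ξ' => ρ₀ x (ξ' * E t) * E t)
        (deriv (ρ₀ x) (ξ * E t) * E t * E t) ξ := by
      have hlin : HasDerivAt (fun ξ' : ℝ => ξ' * E t) (E t) ξ := by
        simpa using (hasDerivAt_id ξ).mul_const (E t)
      have := ((hρ (ξ * E t)).hasDerivAt.comp ξ hlin).mul_const (E t)
      simpa [mul_comm, mul_assoc, mul_left_comm] using this
    have hder : deriv (fun ξ' => ρ₀ x (ξ' * E t) * E t) ξ
        = deriv (ρ₀ x) (ξ * E t) * E t * E t := h3.deriv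
    have := h2
    convert this using 1
    rw [hder]
    ring
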